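/- Let A be an allocation under a profile of matroidal valuations such that A is utilitarian optimal, and its envy graph G_A has neither a path of weight more than 1 nor a positive-weight cycle. Let i be an agent and e an unallocated item, and let A^{i,e} be the allocation obtained from A by adding e to A_i. If G_{A^{i,e}} has no positive-weight path ending at i, then G_{A^{i,e}} also has neither a path of weight more than 1 nor a positive-weight cycle, and A^{i,e} is utilitarian optimal. -/

import Mathlib

open Finset

/-- A matroidal valuation on the goods `Fin m`: a monotone submodular function
with `v ∅ = 0` whose marginal gains lie in `{0,1}`. -/
structure Matroidal (m : ℕ) where
  v : Finset (Fin m) → ℕ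
  v_empty : v ∅ = 0
  mono : ∀ ⦃X Y : Finset (Fin m)⦄, X ⊆ Y → v X ≤ v Y
  submodular : ∀ X Y : Finset (Fin m), v (X ∪ Y) + v (X ∩ Y) ≤ v X + v Y
  marginal : ∀ (X : Finset (Fin m)) (e : Fin m), v (insert e X) ≤ v X + 1

/-- An allocation: the bundles are pairwise disjoint. -/
def IsAllocation {n m : ℕ} (A : Fin n → Finset (Fin m)) : Prop :=
  ∀ i j : Fin n, i ≠ j → Disjoint (A i) (A j)

/-- An allocation is clean (for matroidal valuations) iff each bundle is independent. -/
def Clean {n m : ℕ} (P : Fin n → Matroidal m) (A : Fin n → Finset (Fin m)) : Prop :=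
  ∀ i, (P i).v (A i) = (A i).card

/-- A utilitarian optimal allocation. -/
def UtilOpt {n m : ℕ} (P : Fin n → Matroidal m) (A : Fin n → Finset (Fin m)) : Prop :=
  IsAllocation A ∧ ∀ B : Fin n → Finset (Fin m), IsAllocation B →
    ∑ i, (P i).v (B i) ≤ ∑ i, (P i).v (A i)

/-- The sum of the `k` smallest entries of `u`, as the minimum of all `k`-subset sums. -/
noncomputable def kSmallestSum {n : ℕ} (u : Fin n → ℕ) (k : ℕ) : ℕ :=
  sInf {s | ∃ S : Finset (Fin n), S.card = k ∧ s = ∑ i ∈ S, u i}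

/-- `A` is Lorenz dominating: it is an allocation that Lorenz dominates every allocation. -/
def LorenzDominating {n m : ℕ} (P : Fin n → Matroidal m) (A : Fin n → Finset (Fin m)) : Prop :=
  IsAllocation A ∧ ∀ B : Fin n → Finset (Fin m), IsAllocation B →
    ∀ k ≤ n, kSmallestSum (fun i => (P i).v (B i)) k ≤ kSmallestSum (fun i => (P i).v (A i)) k

/-- The set of clean Lorenz dominating allocations. -/
def cLD {n m : ℕ} (P : Fin n → Matroidal m) : Set (Fin n → Finset (Fin m)) :=
  {A | Clean P A ∧ LorenzDominating P A}

/-- `min_{B ∈ cLD(P)} |B_i|`. -/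
noncomputable def minSize {n m : ℕ} (P : Fin n → Matroidal m) (i : Fin n) : ℕ :=
  sInf {c | ∃ A ∈ cLD P, c = (A i).card}

/-- `max_{B ∈ cLD(P)} |B_i|`. -/
noncomputable def maxSize {n m : ℕ} (P : Fin n → Matroidal m) (i : Fin n) : ℕ :=
  sSup {c | ∃ A ∈ cLD P, c = (A i).card}

/-- The SE subsidy for agent `i` under allocation `A` and profile `P`. -/
noncomputable def sePay {n m : ℕ} (P : Fin n → Matroidal m) (A : Fin n → Finset (Fin m))
    (i : Fin n) : ℕ :=
  if (A i).card = minSize P i ∧ (A i).card < Finset.univ.sup (fun j => (A j).card) then 1 else 0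

/-- Restriction of a matroidal valuation to a set `X`. -/
def Matroidal.restrict {m : ℕ} (w : Matroidal m) (X : Finset (Fin m)) : Matroidal m where
  v Y := w.v (X ∩ Y)
  v_empty := by simp [w.v_empty]
  mono := fun {Y Z} h => w.mono (Finset.inter_subset_inter le_rfl h)
  submodular := fun Y Z => by
    have h := w.submodular (X ∩ Y) (X ∩ Z)
    have h1 : X ∩ (Y ∪ Z) = (X ∩ Y) ∪ (X ∩ Z) := Finset.inter_union_distrib_left X Y Z
    have h2 : X ∩ (Y ∩ Z) = (X ∩ Y) ∩ (X ∩ Z) := by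
      ext a; simp [Finset.mem_inter]; tauto
    simpa [h1, h2] using h
  marginal := fun Y e => by
    by_cases he : e ∈ X
    · have h1 : X ∩ insert e Y = insert e (X ∩ Y) := by
        ext a
        simp only [Finset.mem_inter, Finset.mem_insert]
        constructor
        · rintro ⟨ha, h⟩
          rcases h with rfl | hb
          · exact Or.inl rfl
          · exact Or.inr ⟨ha, hb⟩
        · rintro (rfl | ⟨ha, hb⟩)
          · exact ⟨he, Or.inl rfl⟩
          · exact ⟨ha, Or.inr hb⟩
      simpa [h1] using w.marginal (X ∩ Y) e
    · have h1 : X ∩ insert e Y = X ∩ Y := by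
        ext a
        simp only [Finset.mem_inter, Finset.mem_insert]
        constructor
        · rintro ⟨ha, (rfl | hb)⟩
          · exact absurd ha he
          · exact ⟨ha, hb⟩
        · rintro ⟨ha, hb⟩; exact ⟨ha, Or.inr hb⟩
      simp only [h1]
      exact Nat.le_succ _

/-- The arc weight of the envy graph: `w(i,j) = v_i(A_j) − v_i(A_i)`. -/
def envyW {n m : ℕ} (P : Fin n → Matroidal m) (A : Fin n → Finset (Fin m))
    (i j : Fin n) : ℤ :=
  ((P i).v (A j) : ℤ) - ((P i).v (A i) : ℤ)

/-- The weight of a walk, given as the list of its nodes. -/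
def walkWeight {n : ℕ} (w : Fin n → Fin n → ℤ) : List (Fin n) → ℤ
  | [] => 0
  | [_] => 0
  | a :: b :: l => w a b + walkWeight w (b :: l)


section secHelpers

variable {n : ℕ} (w w₁ w₂ : Fin n → Fin n → ℤ)

lemma walkWeight_append_cons (x : Fin n) : ∀ (l1 l2 : List (Fin n)),
    walkWeight w (l1 ++ x :: l2) = walkWeight w (l1 ++ [x]) + walkWeight w (x :: l2)
  | [], l2 => by cases l2 <;> simp [walkWeight]
  | [a], l2 => by cases l2 <;> simp [walkWeight]
  | a :: b :: t, l2 => by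
    have ih := walkWeight_append_cons x (b :: t) l2
    simp only [List.cons_append, walkWeight, List.append_eq] at ih ⊢
    rw [ih]; ring

lemma walkWeight_congr : ∀ (l : List (Fin n)),
    (∀ x y, y ∈ l.tail → w₁ x y = w₂ x y) → walkWeight w₁ l = walkWeight w₂ l
  | [], _ => rfl
  | [_], _ => rfl
  | a :: b :: t, h => by
    simp only [walkWeight]
    rw [h a b (by simp), walkWeight_congr (b :: t)
      (fun x y hy => h x y (by simp at hy ⊢; tauto))]

lemma walkWeight_eq_sum (d : Fin n) : ∀ (L : List (Fin n)),
    walkWeight w L = ∑ k ∈ Finset.range (L.length - 1), w (L.getD k d) (L.getD (k + 1) d)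
  | [] => by simp [walkWeight]
  | [a] => by simp [walkWeight]
  | a :: b :: t => by
    have ih := walkWeight_eq_sum d (b :: t)
    have hstep : ∀ (x : Fin n) (xs : List (Fin n)) (k : ℕ),
        (x :: xs).getD (k + 1) d = xs.getD k d := fun x xs k => List.getD_cons_succ
    simp only [walkWeight, List.length_cons, Nat.add_sub_cancel] at ih ⊢
    rw [Finset.sum_range_succ', Finset.sum_congr rfl
      (fun k _ => by rw [hstep a (b :: t) k, hstep a (b :: t) (k + 1)])]
    rw [← ih]
    simp only [hstep, List.getD_cons_zero]
    ring

lemma list_sum_range_getD (f : Fin n → ℤ) (d : Fin n) : ∀ (L : List (Fin n)),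
    (L.map f).sum = ∑ k ∈ Finset.range L.length, f (L.getD k d)
  | [] => by simp
  | a :: t => by
    rw [List.map_cons, List.sum_cons, List.length_cons, Finset.sum_range_succ']
    simp only [List.getD_cons_succ, List.getD_cons_zero]
    rw [list_sum_range_getD f d t]; ring

end secHelpers

/-- Lemma 3.20 (one update step of the SEC algorithm): if `A` is a utilitarian optimal
allocation whose envy graph has no path of weight more than 1 and no positive-weight
cycle, `e` is an unallocated item, and the envy graph of `A^{i,e}` has no
positive-weight path ending at `i`, then `A^{i,e}` is utilitarian optimal and its envy
graph has no path of weight more than 1 and no positive-weight cycle. -/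
theorem sec_step_preserves_invariants {n m : ℕ} (P : Fin n → Matroidal m)
    (A : Fin n → Finset (Fin m)) (hopt : UtilOpt P A)
    (hpath : ∀ l : List (Fin n), l.Nodup → walkWeight (envyW P A) l ≤ 1)
    (hcycle : ∀ (a : Fin n) (l : List (Fin n)), (a :: l).Nodup →
      walkWeight (envyW P A) ((a :: l) ++ [a]) ≤ 0)
    (i : Fin n) (e : Fin m) (he : ∀ j : Fin n, e ∉ A j)
    (A' : Fin n → Finset (Fin m)) (hA' : A' = Function.update A i (insert e (A i)))
    (hend : ∀ l : List (Fin n), l.Nodup → l.getLast? = some i →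
      walkWeight (envyW P A') l ≤ 0) :
    (∀ l : List (Fin n), l.Nodup → walkWeight (envyW P A') l ≤ 1) ∧
    (∀ (a : Fin n) (l : List (Fin n)), (a :: l).Nodup →
      walkWeight (envyW P A') ((a :: l) ++ [a]) ≤ 0) ∧
    UtilOpt P A' := by
  obtain ⟨hallocA, hoptA⟩ := hopt
  have hAi : A' i = insert e (A i) := by rw [hA']; simp
  have hAo : ∀ j, j ≠ i → A' j = A j := fun j hj => by
    rw [hA']; exact Function.update_of_ne hj _ _
  -- A' is an allocation
  have hallocA' : IsAllocation A' := by
    intro p q hpq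
    rcases eq_or_ne p i with rfl | hp
    · rw [hAi, hAo q hpq.symm]
      exact Finset.disjoint_insert_left.mpr ⟨he q, hallocA p q hpq⟩
    · rw [hAo p hp]
      rcases eq_or_ne q i with rfl | hq
      · rw [hAi]
        exact Finset.disjoint_insert_right.mpr ⟨he p, hallocA p q hpq⟩
      · rw [hAo q hq]; exact hallocA p q hpq
  have hterm : ∀ j ∈ Finset.univ (α := Fin n), (P j).v (A j) ≤ (P j).v (A' j) := by
    intro j _
    rcases eq_or_ne j i with rfl | hj
    · rw [hAi]; exact (P j).mono (Finset.subset_insert _ _)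
    · rw [hAo j hj]
  have hsum : ∑ j, (P j).v (A' j) = ∑ j, (P j).v (A j) :=
    le_antisymm (hoptA A' hallocA') (Finset.sum_le_sum hterm)
  have hvi : (P i).v (A' i) = (P i).v (A i) :=
    ((Finset.sum_eq_sum_iff_of_le hterm).mp hsum.symm i (Finset.mem_univ i)).symm
  have hW : ∀ j k, k ≠ i → envyW P A' j k = envyW P A j k := by
    intro j k hk
    have h2 : (P j).v (A' j) = (P j).v (A j) := by
      rcases eq_or_ne j i with rfl | hj
      · exact hvi
      · rw [hAo j hj]
    simp [envyW, hAo k hk, h2]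
  have hUtil' : UtilOpt P A' := ⟨hallocA', fun B hB => (hoptA B hB).trans hsum.ge⟩
  refine ⟨?_, ?_, hUtil'⟩
  · -- paths
    intro l hl
    by_cases hi : i ∈ l
    · obtain ⟨l1, l2, rfl⟩ := List.append_of_mem hi
      rw [walkWeight_append_cons]
      have hsub1 : (l1 ++ [i]).Sublist (l1 ++ i :: l2) :=
        (List.cons_sublist_cons.mpr (List.nil_sublist l2)).append_left l1
      have h1 : walkWeight (envyW P A') (l1 ++ [i]) ≤ 0 :=
        hend _ (hsub1.nodup hl) List.getLast?_concat
      have hl2 : (i :: l2).Nodup := (List.sublist_append_right l1 (i :: l2)).nodup hl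
      have h2 : walkWeight (envyW P A') (i :: l2) = walkWeight (envyW P A) (i :: l2) :=
        walkWeight_congr _ _ _ (fun x y hy =>
          hW x y (fun h => (List.nodup_cons.mp hl2).1 (h ▸ hy)))
      have h3 := hpath _ hl2
      rw [h2]
      omega
    · rw [walkWeight_congr _ _ l (fun x y hy =>
        hW x y (fun h => hi (h ▸ List.mem_of_mem_tail hy)))]
      exact hpath l hl
  · -- cycles
    intro a l hnodup
    set σ : Equiv.Perm (Fin n) := (a :: l).formPerm with hσ
    have hlen : ((a :: l) ++ [a]).length - 1 = (a :: l).length := by simp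
    have e1 : walkWeight (envyW P A') ((a :: l) ++ [a]) =
        ∑ k ∈ Finset.range (a :: l).length,
          envyW P A' (((a :: l) ++ [a]).getD k a) (((a :: l) ++ [a]).getD (k + 1) a) := by
      rw [walkWeight_eq_sum (envyW P A') a ((a :: l) ++ [a]), hlen]
    have e2 : ∑ j : Fin n, envyW P A' j (σ j) =
        ∑ k ∈ Finset.range (a :: l).length,
          envyW P A' (((a :: l) ++ [a]).getD k a) (((a :: l) ++ [a]).getD (k + 1) a) := by
      rw [← Finset.sum_subset (Finset.subset_univ (a :: l).toFinset)
        (fun j _ hj => by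
          rw [hσ, List.formPerm_apply_of_notMem (by simpa using hj)]
          simp [envyW])]
      rw [List.sum_toFinset _ hnodup, list_sum_range_getD]
      refine Finset.sum_congr rfl (fun k hk => ?_)
      have hk' : k < (a :: l).length := Finset.mem_range.mp hk
      have hgk : ((a :: l) ++ [a]).getD k a = (a :: l).getD k a := by
        rw [List.getD_eq_getElem _ _ (by simp only [List.length_append]; omega),
          List.getD_eq_getElem _ _ hk']
        exact List.getElem_append_left hk'
      have hgσ : σ ((a :: l).getD k a) = ((a :: l) ++ [a]).getD (k + 1) a := by
        rw [List.getD_eq_getElem _ _ hk', hσ,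
          List.formPerm_apply_getElem (a :: l) hnodup k hk',
          ← List.getD_eq_getElem (a :: l) a (Nat.mod_lt _ (by simp : 0 < (a :: l).length))]
        rcases lt_or_eq_of_le (Nat.succ_le_of_lt hk') with hlt | heq
        · have hlt' : k + 1 < (a :: l).length := hlt
          have hlt'' : k + 1 < ((a :: l) ++ [a]).length := by
            simp only [List.length_append, List.length_singleton]; omega
          rw [Nat.mod_eq_of_lt hlt', List.getD_eq_getElem _ _ hlt',
            List.getD_eq_getElem _ _ hlt'']
          exact (List.getElem_append_left hlt').symm
        · have heq' : k + 1 = (a :: l).length := heq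
          have heq'' : k + 1 < ((a :: l) ++ [a]).length := by
            simp only [List.length_append, List.length_singleton]; omega
          rw [heq', Nat.mod_self, List.getD_cons_zero]
          rw [List.getD_eq_getElem _ _ (heq' ▸ heq'')]
          exact (List.getElem_concat_length rfl _).symm
      rw [hgk, hgσ]
    have hBalloc : IsAllocation (fun j => A' (σ j)) :=
      fun p q hpq => hallocA' _ _ (fun h => hpq (σ.injective h))
    have hBle : ∑ j, (P j).v (A' (σ j)) ≤ ∑ j, (P j).v (A' j) :=
      (hoptA _ hBalloc).trans hsum.ge
    have hfinal : ∑ j : Fin n, envyW P A' j (σ j) ≤ 0 := by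
      have hrw : ∑ j : Fin n, envyW P A' j (σ j) =
          (∑ j, ((P j).v (A' (σ j)) : ℤ)) - ∑ j, ((P j).v (A' j) : ℤ) := by
        rw [← Finset.sum_sub_distrib]; rfl
      have hc1 : ((∑ j, (P j).v (A' (σ j)) : ℕ) : ℤ) ≤ ((∑ j, (P j).v (A' j) : ℕ) : ℤ) :=
        Nat.cast_le.mpr hBle
      push_cast at hc1
      rw [hrw]
      omega
    rw [e1, ← e2]
    exact hfinal
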